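/- Let a = (a_i)_{i∈ℤ} be any doubly infinite sequence and define the multiparameter Schur functions s_{μ;a} = det[h_{μ_i−i+j; τ^{1−j}a}] where the h_{k;a} are determined by 1 + Σ_{k≥1} h_{k;a}/((u−a_1)⋯(u−a_k)) = H(u) and (τ^r a)_i = a_{i+r}. Then the multiparameter Schur functions satisfy the Giambelli formula: s_{μ;a} = det[ s_{(p_i|q_j);a} ]_{i,j=1}^d for every partition μ = (p_1,…,p_d | q_1,…,q_d). -/

import Mathlib

/-!
STATEMENT 8: the multiparameter Schur functions satisfy the Giambelli formula.

Λ is realized as ℂ[h₁, h₂, …].  For a doubly infinite sequence `a : ℤ → ℂ`,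
the multiparameter analogs `h_{k;a}` are determined by the generating series
identity `1 + Σ_{k≥1} h_{k;a}/((u−a₁)⋯(u−a_k)) = H(u)`.  Since
`1/((u−a₁)⋯(u−a_k)) = Σ_{n≥k} h_{n−k}(a₁,…,a_k) u^{−n}` (complete homogeneous
symmetric polynomials of the numbers `a₁,…,a_k`), this generating series
identity is equivalent, coefficientwise, to the triangular relations
`h_n = Σ_{k=0}^n h_{k;a} · h_{n−k}(a₁,…,a_k)` for all `n ≥ 1`, which is how the
defining property is encoded below (for the sequence `a` and all its shifts,
as required by the definition of `s_{μ;a}`).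
-/

noncomputable section

/-- The ring of symmetric functions over ℂ, realized as `ℂ[h₁, h₂, …]`. -/
abbrev SymFn : Type := MvPolynomial ℕ ℂ

/-- Complete homogeneous symmetric functions (`h_0 = 1`, `h_k = 0` for `k < 0`). -/
def hh (k : ℤ) : SymFn :=
  if k < 0 then 0 else if k = 0 then 1 else MvPolynomial.X k.toNat

/-- The hook partition `(p|q) = (p+1, 1^q)` (0-indexed parts). -/
def hookP (p q : ℕ) : ℕ → ℕ := fun i => if i = 0 then p + 1 else if i ≤ q then 1 else 0

/-- The conjugate partition `μ'_i = #{j : μ_j > i}` (0-indexed). -/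
def conjP (μ : ℕ → ℕ) (i : ℕ) : ℕ := Nat.card {j : ℕ // i < μ j}

/-- The shifted sequence `(τ^r a)_i = a_{i+r}`. -/
def shiftSeq (a : ℤ → ℂ) (r : ℤ) : ℤ → ℂ := fun i => a (i + r)

/-- The complete homogeneous symmetric polynomial `h_j(b₁,…,b_k)` of the
numbers `b₁,…,b_k`. -/
def hNum (b : ℤ → ℂ) (k j : ℕ) : ℂ :=
  ∑ m ∈ (Finset.range k).sym j, ((m : Multiset ℕ).map fun i => b ((i : ℤ) + 1)).prod

/-- The multiparameter Schur function
`s_{μ;a} = det[ h_{μ_i − i + j ; τ^{1−j} a} ]_{i,j=1}^k` (0-indexed `i, j`, so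
the shift is `τ^{−j} a` for `j : Fin k`). -/
def mpSchur (hma : (ℤ → ℂ) → ℤ → SymFn) (a : ℤ → ℂ) (μ : ℕ → ℕ) (k : ℕ) : SymFn :=
  Matrix.det (Matrix.of fun i j : Fin k =>
    hma (shiftSeq a (-(j : ℤ))) ((μ i : ℤ) - (i : ℤ) + (j : ℤ)))

section AuxDet
open Matrix Finset
variable {R : Type*} [CommRing R]


/-- determinant of the reversal permutation matrix -/
lemma det_rev_mat : ∀ (d : ℕ),
    Matrix.det (Matrix.of fun t j : Fin d => if (t : ℕ) = d - 1 - (j : ℕ) then (1 : R) else 0)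
      = (-1) ^ (d * (d - 1) / 2) := by
  intro d
  induction d with
  | zero => simp [Matrix.det_isEmpty]
  | succ d ih =>
      rw [Matrix.det_succ_row_zero]
      rw [Finset.sum_eq_single (Fin.last d)]
      · have h1 : (Matrix.of fun t j : Fin (d+1) =>
            if (t : ℕ) = d + 1 - 1 - (j : ℕ) then (1 : R) else 0) 0 (Fin.last d) = 1 := by
          simp [Matrix.of_apply]
        rw [h1, mul_one]
        have h2 : ((Matrix.of fun t j : Fin (d+1) =>
            if (t : ℕ) = d + 1 - 1 - (j : ℕ) then (1 : R) else 0).submatrix Fin.succ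
              (Fin.last d).succAbove)
            = (Matrix.of fun t j : Fin d => if (t : ℕ) = d - 1 - (j : ℕ) then (1 : R) else 0) := by
          ext t j
          simp only [Matrix.submatrix_apply, Fin.succAbove_last, Matrix.of_apply,
            Fin.val_succ, Fin.coe_castSucc]
          have hj : (j : ℕ) < d := j.isLt
          by_cases h : (t : ℕ) = d - 1 - (j : ℕ)
          · rw [if_pos h, if_pos (by omega)]
          · rw [if_neg h, if_neg (by omega)]
        rw [h2, ih, Fin.val_last]
        rw [← pow_add]
        congr 1
        have := Nat.triangle_succ d
        omega
      · intro j _ hj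
        have : (Matrix.of fun t j : Fin (d+1) =>
            if (t : ℕ) = d + 1 - 1 - (j : ℕ) then (1 : R) else 0) 0 j = 0 := by
          simp only [Matrix.of_apply, Fin.val_zero]
          refine if_neg ?_
          intro h
          apply hj
          have hj' : (j : ℕ) < d + 1 := j.isLt
          have : (j : ℕ) = d := by omega
          exact Fin.ext (by simp [this])
        rw [this, mul_zero, zero_mul]
      · intro h; exact absurd (Finset.mem_univ _) h

/-- KEY: determinant of a matrix whose rows below `d` are unit vectors. -/
lemma key_det : ∀ (k : ℕ) {d : ℕ} (hdk : d ≤ k) (P : Matrix (Fin k) (Fin k) R)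
    (q : Fin d → Fin k) (τ : Fin k → Fin k),
    (∀ i j : Fin k, d ≤ (i : ℕ) → P i j = if j = τ i then 1 else 0) →
    (∀ i i' : Fin k, d ≤ (i : ℕ) → i < i' → τ i < τ i') →
    (∀ j j' : Fin d, j < j' → q j' < q j) →
    (∀ (i : Fin k) (j : Fin d), d ≤ (i : ℕ) → τ i ≠ q j) →
    (∀ v : Fin k, (∃ j, q j = v) ∨ ∃ i : Fin k, d ≤ (i : ℕ) ∧ τ i = v) →
    P.det = (-1) ^ (∑ j, (q j : ℕ)) *
      Matrix.det (Matrix.of fun i j : Fin d => P (Fin.castLE hdk i) (q j)) := by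
  intro k
  induction k with
  | zero =>
      intro d hdk P q τ _ _ _ _ _
      interval_cases d
      simp [Matrix.det_isEmpty]
  | succ k ih =>
      intro d hdk P q τ hP hτ hq hdisj hcov
      by_cases hbase : d = k + 1
      · -- base case : no unit rows, q is the reversal
        subst hbase
        -- q j = d - 1 - j
        have hqA : ∀ j : Fin (k+1), (q j : ℕ) + (j : ℕ) ≤ k := by
          intro j
          obtain ⟨n, hn⟩ : ∃ n, (j : ℕ) = n := ⟨j, rfl⟩
          induction n generalizing j with
          | zero => have := (q j).isLt; omega
          | succ n ihn =>
              have hn' : n < k + 1 := by have := j.isLt; omega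
              have hlt : (⟨n, hn'⟩ : Fin (k+1)) < j := by
                rw [Fin.lt_def]; simp [hn]
              have h1 := hq _ _ hlt
              have h2 := ihn ⟨n, hn'⟩ rfl
              simp at h2
              rw [Fin.lt_def] at h1
              omega
        have hqB : ∀ j : Fin (k+1), k - (j : ℕ) ≤ (q j : ℕ) := by
          intro j
          obtain ⟨n, hn⟩ : ∃ n, k - (j : ℕ) = n := ⟨_, rfl⟩
          induction n generalizing j with
          | zero => omega
          | succ n ihn =>
              have hjk : (j : ℕ) < k := by omega
              have hlt : j < (⟨(j : ℕ) + 1, by omega⟩ : Fin (k+1)) := by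
                rw [Fin.lt_def]; simp
              have h1 := hq _ _ hlt
              have h2 := ihn ⟨(j : ℕ) + 1, by omega⟩ (by simp; omega)
              simp at h2
              rw [Fin.lt_def] at h1
              simp at h1
              omega
        have hqval : ∀ j : Fin (k+1), (q j : ℕ) = k - (j : ℕ) := fun j => by
          have := hqA j; have := hqB j; omega
        -- the inner matrix is P * E with E the reversal permutation matrix
        set E : Matrix (Fin (k+1)) (Fin (k+1)) R :=
          Matrix.of fun t j : Fin (k+1) => if (t : ℕ) = (k+1) - 1 - (j : ℕ) then (1 : R) else 0
          with hE
        have hPE : (Matrix.of fun i j : Fin (k+1) =>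
            P (Fin.castLE (le_refl (k+1)) i) (q j)) = P * E := by
          ext i j
          rw [Matrix.mul_apply]
          have hcast : Fin.castLE (le_refl (k+1)) i = i := Fin.ext rfl
          rw [Matrix.of_apply, hcast]
          rw [Finset.sum_eq_single (q j)]
          · rw [hE]; simp only [Matrix.of_apply]
            rw [if_pos (by rw [hqval j]; omega), mul_one]
          · intro t _ ht
            rw [hE]; simp only [Matrix.of_apply]
            rw [if_neg, mul_zero]
            intro hcontra
            exact ht (Fin.ext (by rw [hqval j]; omega))
          · intro h; exact absurd (Finset.mem_univ _) h
        have hsum : (∑ j : Fin (k+1), (q j : ℕ)) = (k+1) * ((k+1) - 1) / 2 := by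
          have : (∑ j : Fin (k+1), (q j : ℕ)) = ∑ j : Fin (k+1), (k - (j : ℕ)) := by
            exact Finset.sum_congr rfl fun j _ => hqval j
          rw [this]
          rw [Fin.sum_univ_eq_sum_range (fun j => k - j)]
          have := Finset.sum_range_reflect (fun j => (j : ℕ)) (k+1)
          simp only [Nat.add_sub_cancel] at this
          calc ∑ j ∈ Finset.range (k+1), (k - j)
              = ∑ j ∈ Finset.range (k+1), (k + 1 - 1 - j) := by
                refine Finset.sum_congr rfl fun j _ => by omega
            _ = ∑ j ∈ Finset.range (k+1), j := this
            _ = (k+1) * ((k+1) - 1) / 2 := Finset.sum_range_id (k+1)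
        rw [hPE, Matrix.det_mul, det_rev_mat, hsum]
        rw [mul_comm (P.det), ← mul_assoc, ← pow_add]
        rw [Even.neg_one_pow ⟨_, rfl⟩, one_mul]
      · have hdk' : d ≤ k := by omega
        set m : Fin (k+1) := τ (Fin.last k) with hm
        have hdlast : d ≤ ((Fin.last k : Fin (k+1)) : ℕ) := by simp [Fin.val_last]; omega
        have hmle : (m : ℕ) ≤ k := by have := m.isLt; omega
        -- all other unit positions are below m
        have hτm : ∀ i : Fin (k+1), d ≤ (i : ℕ) → i ≠ Fin.last k → (τ i : ℕ) < (m : ℕ) := by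
          intro i hi hne
          have : i < Fin.last k := Fin.lt_last_iff_ne_last.mpr hne
          exact hτ i (Fin.last k) hi this
        -- Laplace expansion along the last row
        have hdet1 : P.det = (-1 : R) ^ (k + (m : ℕ)) *
            (P.submatrix Fin.castSucc m.succAbove).det := by
          rw [Matrix.det_succ_row P (Fin.last k)]
          rw [Finset.sum_eq_single m]
          · rw [hP _ _ hdlast, if_pos rfl, mul_one, Fin.val_last, Fin.succAbove_last]
          · intro j _ hj
            rw [hP _ _ hdlast, if_neg hj, mul_zero, zero_mul]
          · intro h; exact absurd (Finset.mem_univ _) h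
        set P' : Matrix (Fin k) (Fin k) R := P.submatrix Fin.castSucc m.succAbove with hP'
        -- new column positions
        have hqne : ∀ j : Fin d, q j ≠ m := fun j h => hdisj (Fin.last k) j hdlast h.symm
        set q' : Fin d → Fin k := fun j =>
          if h : (q j : ℕ) < (m : ℕ) then ⟨(q j : ℕ), lt_of_lt_of_le h hmle⟩
          else ⟨(q j : ℕ) - 1, by
            have h1 := (q j).isLt
            have h2 : 0 < d := j.pos
            omega⟩ with hq'
        have hq'val : ∀ j : Fin d, (q' j : ℕ) = if (q j : ℕ) < (m : ℕ) then (q j : ℕ) else (q j : ℕ) - 1 := by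
          intro j; rw [hq']; split_ifs with h <;> simp [h]
        have hq'gt : ∀ j : Fin d, ¬ (q j : ℕ) < (m : ℕ) → (m : ℕ) < (q j : ℕ) := by
          intro j h
          have := hqne j
          rw [← Fin.val_ne_iff] at this
          omega
        have hq'succ : ∀ j : Fin d, m.succAbove (q' j) = q j := by
          intro j
          by_cases h : (q j : ℕ) < (m : ℕ)
          · rw [Fin.succAbove_of_castSucc_lt m (q' j)
              (by rw [Fin.lt_def, Fin.coe_castSucc, hq'val j, if_pos h]; exact h)]
            apply Fin.ext
            rw [Fin.coe_castSucc, hq'val j, if_pos h]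
          · have hgt := hq'gt j h
            rw [Fin.succAbove_of_le_castSucc m (q' j)
              (by rw [Fin.le_def, Fin.coe_castSucc, hq'val j, if_neg h]; omega)]
            apply Fin.ext
            rw [Fin.val_succ, hq'val j, if_neg h]
            omega
        -- new unit positions
        set τ' : Fin k → Fin k := fun i =>
          if h : (τ i.castSucc : ℕ) < k then ⟨(τ i.castSucc : ℕ), h⟩ else ⟨0, i.pos⟩ with hτ'def
        have hτ'lt : ∀ i : Fin k, d ≤ (i : ℕ) → (τ i.castSucc : ℕ) < (m : ℕ) := by
          intro i hi
          exact hτm i.castSucc (by rwa [Fin.coe_castSucc]) (by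
            intro hcontra
            have := congrArg Fin.val hcontra
            rw [Fin.coe_castSucc, Fin.val_last] at this
            exact absurd this (Nat.ne_of_lt i.isLt))
        have hτ'val : ∀ i : Fin k, d ≤ (i : ℕ) → (τ' i : ℕ) = (τ i.castSucc : ℕ) := by
          intro i hi
          have h1 : (τ i.castSucc : ℕ) < k := lt_of_lt_of_le (hτ'lt i hi) hmle
          rw [hτ'def]; simp only [dif_pos h1]
        have hτ'succ : ∀ i : Fin k, d ≤ (i : ℕ) → m.succAbove (τ' i) = τ i.castSucc := by
          intro i hi
          rw [Fin.succAbove_of_castSucc_lt m (τ' i)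
            (by rw [Fin.lt_def, Fin.coe_castSucc, hτ'val i hi]; exact hτ'lt i hi)]
          apply Fin.ext
          rw [Fin.coe_castSucc, hτ'val i hi]
        -- hypotheses of the inductive step
        have hP'unit : ∀ i j : Fin k, d ≤ (i : ℕ) → P' i j = if j = τ' i then 1 else 0 := by
          intro i j hi
          rw [hP', Matrix.submatrix_apply, hP _ _ (by rwa [Fin.coe_castSucc])]
          apply if_congr _ rfl rfl
          constructor
          · intro h
            exact Fin.succAbove_right_injective (p := m) (by rw [hτ'succ i hi]; exact h)
          · intro h; rw [h, hτ'succ i hi]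
        have hτ'mono : ∀ i i' : Fin k, d ≤ (i : ℕ) → i < i' → τ' i < τ' i' := by
          intro i i' hi hii
          have hi' : d ≤ (i' : ℕ) := le_trans hi (le_of_lt hii)
          rw [Fin.lt_def, hτ'val i hi, hτ'val i' hi']
          have := hτ i.castSucc i'.castSucc (by rwa [Fin.coe_castSucc])
            (by rwa [Fin.castSucc_lt_castSucc_iff])
          exact this
        have hq'anti : ∀ j j' : Fin d, j < j' → q' j' < q' j := by
          intro j j' hjj
          have h1 := hq j j' hjj
          rw [Fin.lt_def] at h1 ⊢
          rw [hq'val j, hq'val j']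
          have h2 := hqne j
          have h3 := hqne j'
          rw [← Fin.val_ne_iff] at h2 h3
          split_ifs <;> omega
        have hdisj' : ∀ (i : Fin k) (j : Fin d), d ≤ (i : ℕ) → τ' i ≠ q' j := by
          intro i j hi hcontra
          apply hdisj i.castSucc j (by rwa [Fin.coe_castSucc])
          rw [← hτ'succ i hi, hcontra, hq'succ j]
        have hcov' : ∀ v : Fin k, (∃ j, q' j = v) ∨ ∃ i : Fin k, d ≤ (i : ℕ) ∧ τ' i = v := by
          intro v
          rcases hcov (m.succAbove v) with ⟨j, hj⟩ | ⟨i, hi, hti⟩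
          · left; exact ⟨j, Fin.succAbove_right_injective (p := m) (by rw [hq'succ j, hj])⟩
          · right
            have hne : i ≠ Fin.last k := by
              intro hcontra
              rw [hcontra] at hti
              exact Fin.succAbove_ne m v (hti.symm ▸ rfl)
            obtain ⟨i', rfl⟩ : ∃ i' : Fin k, i'.castSucc = i := ⟨⟨(i:ℕ), by
                have := i.isLt
                have : (i : ℕ) ≠ k := fun hc => hne (Fin.ext (by rw [hc, Fin.val_last]))
                omega⟩, Fin.ext rfl⟩
            refine ⟨i', by rwa [Fin.coe_castSucc] at hi, ?_⟩
            apply Fin.succAbove_right_injective (p := m)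
            rw [hτ'succ i' (by rwa [Fin.coe_castSucc] at hi), hti]
        -- apply the inductive hypothesis
        have hIH := ih hdk' P' q' τ' hP'unit hτ'mono hq'anti hdisj' hcov'
        -- the inner matrices agree
        have hinner : (Matrix.of fun i j : Fin d => P' (Fin.castLE hdk' i) (q' j)) =
            (Matrix.of fun i j : Fin d => P (Fin.castLE hdk i) (q j)) := by
          ext i j
          rw [Matrix.of_apply, Matrix.of_apply, hP', Matrix.submatrix_apply, hq'succ j]
          have hcc : (Fin.castSucc (Fin.castLE hdk' i)) = Fin.castLE hdk i := Fin.ext rfl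
          rw [hcc]
        -- count of large q-values
        have hcard : (Finset.univ.filter (fun j : Fin d => (m : ℕ) < (q j : ℕ))).card = k - (m : ℕ) := by
          have hqinj : Function.Injective q := by
            intro j j' h
            rcases lt_trichotomy j j' with hlt | heq | hlt
            · exact absurd h (ne_of_gt (hq j j' hlt))
            · exact heq
            · exact absurd h.symm (ne_of_gt (hq j' j hlt))
          have h2 : (Finset.Ioi m).card = k - (m : ℕ) := by rw [Fin.card_Ioi]; omega
          rw [← h2]
          apply Finset.card_bij (fun j _ => q j)
          · intro j hj
            rw [Finset.mem_filter] at hj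
            rw [Finset.mem_Ioi, Fin.lt_def]
            exact hj.2
          · intro j _ j' _ h; exact hqinj h
          · intro v hv
            rw [Finset.mem_Ioi, Fin.lt_def] at hv
            rcases hcov v with ⟨j, hj⟩ | ⟨i, hi, hti⟩
            · exact ⟨j, Finset.mem_filter.mpr ⟨Finset.mem_univ _, by rw [hj]; exact hv⟩, hj⟩
            · exfalso
              by_cases hne : i = Fin.last k
              · rw [hne] at hti
                have := congrArg Fin.val hti
                omega
              · have := hτm i hi hne; rw [hti] at this; omega
        -- sum relation
        have hsum : (∑ j, (q j : ℕ)) = (∑ j, (q' j : ℕ)) + (k - (m : ℕ)) := by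
          rw [← hcard, Finset.card_filter, ← Finset.sum_add_distrib]
          refine Finset.sum_congr rfl fun j _ => ?_
          have h1 := hq'val j
          have h2 := hq'gt j
          split_ifs with h
          · rw [h1, if_neg (by omega)]; omega
          · have hne : (q j : ℕ) ≠ (m : ℕ) := fun hc => hqne j (Fin.ext hc)
            rw [h1, if_pos (by omega)]
            omega
        -- conclude
        rw [hdet1, hIH, hinner, ← mul_assoc, ← pow_add]
        have hfin : k + (m : ℕ) + (∑ j, (q' j : ℕ)) = (∑ j, (q j : ℕ)) + 2 * (m : ℕ) := by omega
        rw [hfin, pow_add, pow_mul, neg_one_sq, one_pow, mul_one]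
end AuxDet

section AuxConj
open Finset

lemma conjP_eq_card (μ : ℕ → ℕ) (k : ℕ) (hk : ∀ i, k ≤ i → μ i = 0) (i : ℕ) :
    conjP μ i = ((Finset.range k).filter (fun j => i < μ j)).card := by
  have hset : {j : ℕ | i < μ j} = ((Finset.range k).filter (fun j => i < μ j) : Finset ℕ) := by
    ext j
    simp only [Set.mem_setOf_eq, Finset.coe_filter, Finset.mem_range, Set.mem_setOf_eq]
    constructor
    · intro h
      refine ⟨?_, h⟩
      by_contra hc
      rw [hk j (by omega)] at h
      omega
    · exact fun h => h.2
  rw [conjP]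
  have : Nat.card {j : ℕ // i < μ j} = Nat.card ({j : ℕ | i < μ j} : Set ℕ) := rfl
  rw [this, Nat.card_coe_set_eq, hset, Set.ncard_coe_finset]

lemma conjP_le (μ : ℕ → ℕ) (k : ℕ) (hk : ∀ i, k ≤ i → μ i = 0) (i : ℕ) :
    conjP μ i ≤ k := by
  rw [conjP_eq_card μ k hk]
  calc _ ≤ (Finset.range k).card := Finset.card_le_card (Finset.filter_subset _ _)
    _ = k := Finset.card_range k

lemma conjP_anti (μ : ℕ → ℕ) (k : ℕ) (hk : ∀ i, k ≤ i → μ i = 0) {i i' : ℕ} (h : i ≤ i') :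
    conjP μ i' ≤ conjP μ i := by
  rw [conjP_eq_card μ k hk, conjP_eq_card μ k hk]
  apply Finset.card_le_card
  intro j hj
  rw [Finset.mem_filter] at hj ⊢
  exact ⟨hj.1, by omega⟩

lemma conjP_ge (μ : ℕ → ℕ) (hμ : Antitone μ) (k : ℕ) (hk : ∀ i, k ≤ i → μ i = 0)
    {i j : ℕ} (hij : j < μ i) : i + 1 ≤ conjP μ j := by
  have hik : i < k := by
    by_contra hc
    rw [hk i (by omega)] at hij; omega
  rw [conjP_eq_card μ k hk]
  calc i + 1 = (Finset.range (i+1)).card := (Finset.card_range _).symm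
    _ ≤ _ := by
        apply Finset.card_le_card
        intro x hx
        rw [Finset.mem_range] at hx
        rw [Finset.mem_filter, Finset.mem_range]
        exact ⟨by omega, lt_of_lt_of_le hij (hμ (by omega))⟩

lemma conjP_lt (μ : ℕ → ℕ) (hμ : Antitone μ) (k : ℕ) (hk : ∀ i, k ≤ i → μ i = 0)
    {i j : ℕ} (hij : μ i ≤ j) : conjP μ j ≤ i := by
  rw [conjP_eq_card μ k hk]
  calc _ ≤ (Finset.range i).card := by
        apply Finset.card_le_card
        intro x hx
        rw [Finset.mem_filter, Finset.mem_range] at hx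
        rw [Finset.mem_range]
        by_contra hc
        have := hμ (show i ≤ x by omega)
        omega
    _ = i := Finset.card_range _

end AuxConj

open Matrix Finset in
/-- `mpSchur` does not depend on the size of the determinant, provided it
exceeds the length of the partition. -/
lemma mpSchur_stable (hma : (ℤ → ℂ) → ℤ → SymFn)
    (hma0 : ∀ b : ℤ → ℂ, hma b 0 = 1)
    (hmaneg : ∀ (b : ℤ → ℂ) (r : ℤ), r < 0 → hma b r = 0)
    (a : ℤ → ℂ) (ν : ℕ → ℕ) (n₀ : ℕ) (hν : ∀ r, n₀ ≤ r → ν r = 0) :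
    ∀ n, n₀ ≤ n → mpSchur hma a ν n = mpSchur hma a ν n₀ := by
  intro n
  induction n with
  | zero => intro h; interval_cases n₀; rfl
  | succ n ihn =>
      intro h
      rcases Nat.eq_or_lt_of_le h with heq | hlt
      · rw [heq]
      · have hn : n₀ ≤ n := by omega
        rw [← ihn hn]
        show Matrix.det _ = Matrix.det _
        rw [Matrix.det_succ_row _ (Fin.last n)]
        rw [Finset.sum_eq_single (Fin.last n)]
        · have he : (Matrix.of fun i j : Fin (n+1) =>
              hma (shiftSeq a (-(j : ℤ))) ((ν i : ℤ) - (i : ℤ) + (j : ℤ)))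
                (Fin.last n) (Fin.last n) = 1 := by
            rw [Matrix.of_apply, Fin.val_last, hν n hn]
            simp only [Nat.cast_zero, zero_sub, neg_add_cancel]
            exact hma0 _
          rw [he, mul_one, Fin.val_last, ← two_mul, pow_mul, neg_one_sq, one_pow, one_mul]
          congr 1
          ext i j
          simp only [Matrix.submatrix_apply, Fin.succAbove_last, Matrix.of_apply,
            Fin.coe_castSucc]
        · intro j _ hj
          have hz : (Matrix.of fun i j : Fin (n+1) =>
              hma (shiftSeq a (-(j : ℤ))) ((ν i : ℤ) - (i : ℤ) + (j : ℤ)))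
                (Fin.last n) j = 0 := by
            rw [Matrix.of_apply, Fin.val_last, hν n hn]
            apply hmaneg
            have hjn : (j : ℕ) < n := by
              have h1 := j.isLt
              have h2 : (j : ℕ) ≠ n := fun hc => hj (Fin.ext (by rw [hc, Fin.val_last]))
              omega
            push_cast
            omega
          rw [hz, mul_zero, zero_mul]
        · intro hmem; exact absurd (Finset.mem_univ _) hmem

open Matrix Finset in
theorem multiparameter_giambelli (a : ℤ → ℂ)
    (hma : (ℤ → ℂ) → ℤ → SymFn)
    (hma0 : ∀ b : ℤ → ℂ, hma b 0 = 1)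
    (hmaneg : ∀ (b : ℤ → ℂ) (r : ℤ), r < 0 → hma b r = 0)
    (hrel : ∀ (b : ℤ → ℂ) (n : ℕ), 1 ≤ n →
      hh n = ∑ k ∈ Finset.range (n + 1),
        hma b k * MvPolynomial.C (hNum b k (n - k)))
    (μ : ℕ → ℕ) (hμ : Antitone μ) (k : ℕ) (hk : ∀ i, k ≤ i → μ i = 0)
    (d : ℕ) (hd : ∀ i, i < d ↔ i < μ i) :
    mpSchur hma a μ k =
      Matrix.det (Matrix.of fun i j : Fin d =>
        mpSchur hma a (hookP (μ i - (i + 1)) (conjP μ j - (j + 1)))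
          (conjP μ (j : ℕ) - (j : ℕ))) := by
  -- elementary facts about μ, d, k
  have hlow : ∀ i, i < d → i < μ i := fun i h => (hd i).mp h
  have hhigh : ∀ i, d ≤ i → μ i ≤ i := by
    intro i h
    by_contra hc
    exact absurd ((hd i).mpr (by omega)) (by omega)
  have hdk : d ≤ k := by
    rcases Nat.eq_zero_or_pos d with h0 | h0
    · omega
    · have h1 := hlow (d-1) (by omega)
      by_contra hc
      rw [hk (d-1) (by omega)] at h1
      omega
  -- the Frobenius coordinates q_j
  set Q : ℕ → ℕ := fun j => conjP μ j - (j+1) with hQdef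
  have hQval : ∀ j, j < d → Q j + (j+1) = conjP μ j := by
    intro j hj
    have := conjP_ge μ hμ k hk (hlow j hj)
    simp only [hQdef]
    omega
  have hQlt : ∀ j, j < d → Q j < k := by
    intro j hj
    have h1 := hQval j hj
    have h2 := conjP_le μ k hk j
    omega
  have hQanti : ∀ j j', j < j' → j' < d → Q j' < Q j := by
    intro j j' h hj'
    have h1 := hQval j (by omega)
    have h2 := hQval j' hj'
    have h3 := conjP_anti μ k hk (show j ≤ j' by omega)
    omega
  have htQ : ∀ i, d ≤ i → i < k → ∀ j, j < d → i - μ i ≠ Q j := by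
    intro i hi hik j hj hc
    have h1 := hQval j hj
    have h2 := hhigh i hi
    by_cases hcase : j < μ i
    · have := conjP_ge μ hμ k hk hcase
      omega
    · have := conjP_lt μ hμ k hk (show μ i ≤ j by omega)
      omega
  have htmono : ∀ i i', d ≤ i → i < i' → i' < k → i - μ i < i' - μ i' := by
    intro i i' hi hii hik
    have h1 := hhigh i hi
    have h2 := hhigh i' (by omega)
    have h3 := hμ (show i ≤ i' by omega)
    omega
  -- covering property
  have hcover : ∀ v, v < k → (∃ j, j < d ∧ Q j = v) ∨ (∃ i, d ≤ i ∧ i < k ∧ i - μ i = v) := by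
    intro v hv
    have hQinj : Set.InjOn Q (Finset.range d) := by
      intro x hx y hy hxy
      simp only [Finset.coe_range, Set.mem_Iio] at hx hy
      rcases lt_trichotomy x y with h | h | h
      · exact absurd hxy (ne_of_gt (hQanti x y h hy))
      · exact h
      · exact absurd hxy.symm (ne_of_gt (hQanti y x h hx))
    have htinj : Set.InjOn (fun i => i - μ i) (Finset.Ico d k) := by
      intro x hx y hy hxy
      simp only [Finset.coe_Ico, Set.mem_Ico] at hx hy
      rcases lt_trichotomy x y with h | h | h
      · exact absurd hxy (ne_of_lt (htmono x y hx.1 h hy.2))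
      · exact h
      · exact absurd hxy (ne_of_gt (htmono y x hy.1 h hx.2))
    set S₁ := (Finset.range d).image Q with hS₁
    set S₂ := (Finset.Ico d k).image (fun i => i - μ i) with hS₂
    have hsub : S₁ ∪ S₂ ⊆ Finset.range k := by
      intro x hx
      rw [Finset.mem_union] at hx
      rw [Finset.mem_range]
      rcases hx with hx | hx
      · rw [hS₁, Finset.mem_image] at hx
        obtain ⟨j, hj, rfl⟩ := hx
        rw [Finset.mem_range] at hj
        exact hQlt j hj
      · rw [hS₂, Finset.mem_image] at hx
        obtain ⟨i, hi, rfl⟩ := hx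
        rw [Finset.mem_Ico] at hi
        omega
    have hdisj : Disjoint S₁ S₂ := by
      rw [Finset.disjoint_left]
      intro x hx1 hx2
      rw [hS₁, Finset.mem_image] at hx1
      rw [hS₂, Finset.mem_image] at hx2
      obtain ⟨j, hj, hjx⟩ := hx1
      obtain ⟨i, hi, hix⟩ := hx2
      rw [Finset.mem_range] at hj
      rw [Finset.mem_Ico] at hi
      exact htQ i hi.1 hi.2 j hj (by omega)
    have hcard : (S₁ ∪ S₂).card = k := by
      rw [Finset.card_union_of_disjoint hdisj, hS₁, hS₂,
        Finset.card_image_of_injOn hQinj, Finset.card_image_of_injOn htinj,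
        Finset.card_range, Nat.card_Ico]
      omega
    have heqrange : S₁ ∪ S₂ = Finset.range k :=
      Finset.eq_of_subset_of_card_le hsub (by rw [hcard, Finset.card_range])
    have hvmem : v ∈ S₁ ∪ S₂ := by rw [heqrange, Finset.mem_range]; exact hv
    rw [Finset.mem_union] at hvmem
    rcases hvmem with hx | hx
    · left
      rw [hS₁, Finset.mem_image] at hx
      obtain ⟨j, hj, hjx⟩ := hx
      rw [Finset.mem_range] at hj
      exact ⟨j, hj, hjx⟩
    · right
      rw [hS₂, Finset.mem_image] at hx
      obtain ⟨i, hi, hix⟩ := hx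
      rw [Finset.mem_Ico] at hi
      exact ⟨i, hi.1, hi.2, hix⟩
  -- the unitriangular matrix U
  set U : Matrix (Fin k) (Fin k) SymFn :=
    Matrix.of (fun t j : Fin k => hma (shiftSeq a (-(j : ℤ))) ((j : ℤ) - (t : ℤ))) with hU
  have hUtri : U.BlockTriangular id := by
    intro t j h
    simp only [id] at h
    rw [hU, Matrix.of_apply]
    apply hmaneg
    have := Fin.lt_def.mp h
    omega
  have hUdet : U.det = 1 := by
    rw [Matrix.det_of_upperTriangular hUtri]
    apply Finset.prod_eq_one
    intro t _
    rw [hU, Matrix.of_apply, sub_self]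
    exact hma0 _
  have hUunit : IsUnit U.det := by rw [hUdet]; exact isUnit_one
  set V : Matrix (Fin d) (Fin k) SymFn :=
    Matrix.of (fun (i : Fin d) (s : Fin k) =>
      hma (shiftSeq a (-(s : ℤ))) ((μ (i : ℕ) : ℤ) - (i : ℤ) + (s : ℤ))) with hV
  set C : Matrix (Fin d) (Fin k) SymFn := V * U⁻¹ with hC
  have hCU : C * U = V := by
    rw [hC, Matrix.mul_assoc, Matrix.nonsing_inv_mul U hUunit, Matrix.mul_one]
  set qF : Fin d → Fin k := fun j => ⟨Q (j : ℕ), hQlt _ j.isLt⟩ with hqF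
  set τF : Fin k → Fin k := fun i => ⟨(i : ℕ) - μ (i : ℕ), by have := i.isLt; omega⟩ with hτF
  set Pmat : Matrix (Fin k) (Fin k) SymFn := Matrix.of (fun i t : Fin k =>
    if h : (i : ℕ) < d then C ⟨(i : ℕ), h⟩ t else (if t = τF i then (1 : SymFn) else 0))
    with hPmat
  -- factorization of the Jacobi–Trudi matrix
  have hLHS : mpSchur hma a μ k = Pmat.det := by
    have hfact : (Matrix.of fun i j : Fin k =>
        hma (shiftSeq a (-(j : ℤ))) ((μ (i : ℕ) : ℤ) - (i : ℤ) + (j : ℤ))) = Pmat * U := by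
      refine Matrix.ext fun i j => ?_
      rw [Matrix.mul_apply, Matrix.of_apply]
      by_cases h : (i : ℕ) < d
      · have hrow : ∀ t, Pmat i t = C ⟨(i : ℕ), h⟩ t := fun t => by
          rw [hPmat, Matrix.of_apply, dif_pos h]
        calc hma (shiftSeq a (-(j : ℤ))) ((μ (i : ℕ) : ℤ) - (i : ℤ) + (j : ℤ))
            = V ⟨(i : ℕ), h⟩ j := by rw [hV, Matrix.of_apply]
          _ = (C * U) ⟨(i : ℕ), h⟩ j := by rw [hCU]
          _ = ∑ t, C ⟨(i : ℕ), h⟩ t * U t j := Matrix.mul_apply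
          _ = ∑ t, Pmat i t * U t j := Finset.sum_congr rfl fun t _ => by rw [hrow t]
      · rw [Finset.sum_eq_single (τF i)]
        · rw [hPmat, Matrix.of_apply, dif_neg h, if_pos rfl, one_mul, hU, Matrix.of_apply]
          congr 1
          have hμi : μ (i : ℕ) ≤ (i : ℕ) := hhigh _ (by omega)
          have hvq : ((τF i : Fin k) : ℕ) = (i : ℕ) - μ (i : ℕ) := rfl
          rw [hvq]
          push_cast [Nat.cast_sub hμi]
          ring
        · intro t _ ht
          rw [hPmat, Matrix.of_apply, dif_neg h, if_neg ht, zero_mul]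
        · intro hmem; exact absurd (Finset.mem_univ _) hmem
    show Matrix.det _ = _
    rw [hfact, Matrix.det_mul, hUdet, mul_one]
  -- apply the key lemma to the Jacobi–Trudi matrix
  have hKEY := key_det k hdk Pmat qF τF
    (fun i j hi => by rw [hPmat, Matrix.of_apply, dif_neg (by omega)])
    (fun i i' hi hii => by
      rw [Fin.lt_def]
      exact htmono (i : ℕ) (i' : ℕ) hi (Fin.lt_def.mp hii) i'.isLt)
    (fun j j' hjj => by
      rw [Fin.lt_def]
      exact hQanti _ _ (Fin.lt_def.mp hjj) j'.isLt)
    (fun i j hi hc => htQ (i : ℕ) hi i.isLt (j : ℕ) j.isLt (congrArg Fin.val hc))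
    (fun v => by
      rcases hcover (v : ℕ) v.isLt with ⟨j, hj, hjv⟩ | ⟨i, hi1, hi2, hiv⟩
      · exact Or.inl ⟨⟨j, hj⟩, Fin.ext hjv⟩
      · exact Or.inr ⟨⟨i, hi2⟩, hi1, Fin.ext hiv⟩)
  have hinnerL : (Matrix.of fun i j : Fin d => Pmat (Fin.castLE hdk i) (qF j)) =
      Matrix.of (fun i j : Fin d => C i (qF j)) := by
    refine Matrix.ext fun i j => ?_
    rw [Matrix.of_apply, Matrix.of_apply, hPmat, Matrix.of_apply, dif_pos (show ((Fin.castLE hdk i : Fin k) : ℕ) < d from i.isLt)]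
    congr 1
  have hLHS2 : mpSchur hma a μ k = (-1) ^ (∑ j : Fin d, Q (j : ℕ)) *
      Matrix.det (Matrix.of fun i j : Fin d => C i (qF j)) := by
    rw [hLHS, hKEY, hinnerL]
  -- per-entry identification of the right-hand side
  have hENTRY : ∀ i j : Fin d,
      mpSchur hma a (hookP (μ (i : ℕ) - ((i : ℕ) + 1)) (conjP μ (j : ℕ) - ((j : ℕ) + 1)))
        (conjP μ (j : ℕ) - (j : ℕ)) = (-1) ^ (Q (j : ℕ)) * C i (qF j) := by
    intro i j
    have hjd : (j : ℕ) < d := j.isLt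
    have hid : (i : ℕ) < d := i.isLt
    have hQj := hQval _ hjd
    have hQk := hQlt _ hjd
    set p : ℕ := μ (i : ℕ) - ((i : ℕ) + 1) with hp
    have hQQ : conjP μ (j : ℕ) - ((j : ℕ) + 1) = Q (j : ℕ) := rfl
    have hsize : conjP μ (j : ℕ) - (j : ℕ) = Q (j : ℕ) + 1 := by omega
    rw [hQQ, hsize]
    have hvan : ∀ r, Q (j : ℕ) + 1 ≤ r → hookP p (Q (j : ℕ)) r = 0 := by
      intro r hr
      simp only [hookP]
      rw [if_neg (by omega), if_neg (by omega)]
    rw [← mpSchur_stable hma hma0 hmaneg a (hookP p (Q (j : ℕ))) (Q (j : ℕ) + 1) hvan k (by omega)]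
    -- hook factorization
    set τh : Fin k → Fin k := fun r =>
      ⟨if (r : ℕ) ≤ Q (j : ℕ) then (r : ℕ) - 1 else (r : ℕ),
        by have := r.isLt; split_ifs <;> omega⟩ with hτh
    have hτhval : ∀ r : Fin k,
        ((τh r : Fin k) : ℕ) = if (r : ℕ) ≤ Q (j : ℕ) then (r : ℕ) - 1 else (r : ℕ) :=
      fun r => rfl
    set Ph : Matrix (Fin k) (Fin k) SymFn := Matrix.of (fun r t : Fin k =>
      if (r : ℕ) = 0 then C i t else (if t = τh r then (1 : SymFn) else 0)) with hPh
    have hfacth : (Matrix.of fun r t : Fin k =>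
        hma (shiftSeq a (-(t : ℤ))) ((hookP p (Q (j : ℕ)) (r : ℕ) : ℤ) - (r : ℤ) + (t : ℤ)))
          = Ph * U := by
      refine Matrix.ext fun r t => ?_
      rw [Matrix.mul_apply, Matrix.of_apply]
      by_cases h0 : (r : ℕ) = 0
      · have hrow : ∀ s, Ph r s = C i s := fun s => by rw [hPh, Matrix.of_apply, if_pos h0]
        have hhook0 : hookP p (Q (j : ℕ)) (r : ℕ) = p + 1 := by
          simp only [hookP]; rw [if_pos h0]
        have hμi : (i : ℕ) < μ (i : ℕ) := hlow _ hid
        calc hma (shiftSeq a (-(t : ℤ))) ((hookP p (Q (j : ℕ)) (r : ℕ) : ℤ) - (r : ℤ) + (t : ℤ))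
            = V i t := by
              rw [hV, Matrix.of_apply]
              congr 1
              rw [hhook0, hp, h0]
              push_cast
              omega
          _ = (C * U) i t := by rw [hCU]
          _ = ∑ s, C i s * U s t := Matrix.mul_apply
          _ = ∑ s, Ph r s * U s t := Finset.sum_congr rfl fun s _ => by rw [hrow s]
      · rw [Finset.sum_eq_single (τh r)]
        · rw [hPh, Matrix.of_apply, if_neg h0, if_pos rfl, one_mul, hU, Matrix.of_apply]
          congr 1
          rw [hτhval r]
          simp only [hookP]
          rw [if_neg h0]
          by_cases hc : (r : ℕ) ≤ Q (j : ℕ)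
          · rw [if_pos hc, if_pos hc]
            push_cast
            omega
          · rw [if_neg hc, if_neg hc]
            push_cast
            omega
        · intro s _ hs
          rw [hPh, Matrix.of_apply, if_neg h0, if_neg hs, zero_mul]
        · intro hmem; exact absurd (Finset.mem_univ _) hmem
    have h1k : 1 ≤ k := by omega
    have hKEYh := key_det k h1k Ph (fun _ => qF j) τh
      (fun r t hr => by rw [hPh, Matrix.of_apply, if_neg (by omega)])
      (fun r r' hr hrr => by
        rw [Fin.lt_def, hτhval r, hτhval r']
        have h1 := Fin.lt_def.mp hrr
        split_ifs <;> omega)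
      (fun j₁ j₂ hjj => by
        have h1 := j₁.isLt
        have h2 := j₂.isLt
        have h3 := Fin.lt_def.mp hjj
        omega)
      (fun r j₁ hr hc => by
        have h1 := congrArg Fin.val hc
        rw [hτhval r] at h1
        have h2 : ((qF j : Fin k) : ℕ) = Q (j : ℕ) := rfl
        rw [h2] at h1
        revert h1
        split_ifs <;> omega)
      (fun v => by
        by_cases hv : (v : ℕ) = Q (j : ℕ)
        · exact Or.inl ⟨0, Fin.ext (show ((qF j : Fin k) : ℕ) = (v : ℕ) from hv.symm)⟩
        · right
          by_cases hlt : (v : ℕ) < Q (j : ℕ)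
          · refine ⟨⟨(v : ℕ) + 1, by omega⟩, by simp, Fin.ext ?_⟩
            rw [hτhval]
            simp only
            rw [if_pos (by omega)]
            omega
          · refine ⟨⟨(v : ℕ), v.isLt⟩, by simp; omega, Fin.ext ?_⟩
            rw [hτhval]
            simp only
            rw [if_neg (by omega)])
    show Matrix.det _ = _
    rw [hfacth, Matrix.det_mul, hUdet, mul_one, hKEYh]
    have hsum1 : (∑ _j' : Fin 1, ((qF j : Fin k) : ℕ)) = Q (j : ℕ) := by simp; rfl
    have hdet1x : Matrix.det (Matrix.of fun i' j' : Fin 1 => Ph (Fin.castLE h1k i') (qF j))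
        = C i (qF j) := by
      rw [Matrix.det_fin_one]
      rw [Matrix.of_apply, hPh, Matrix.of_apply,
        if_pos (show ((Fin.castLE h1k (0 : Fin 1) : Fin k) : ℕ) = 0 from rfl)]
    rw [hsum1, hdet1x]
  -- conclude
  have hRHSmat : (Matrix.of fun i j : Fin d =>
      mpSchur hma a (hookP (μ (i : ℕ) - ((i : ℕ) + 1)) (conjP μ (j : ℕ) - ((j : ℕ) + 1)))
        (conjP μ (j : ℕ) - (j : ℕ)))
      = Matrix.of (fun i j : Fin d => (-1) ^ (Q (j : ℕ)) * C i (qF j)) := by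
    refine Matrix.ext fun i j => ?_
    rw [Matrix.of_apply, Matrix.of_apply, hENTRY i j]
  have hdm := Matrix.det_mul_row (fun j : Fin d => (-1 : SymFn) ^ (Q (j : ℕ)))
    (Matrix.of fun i j : Fin d => C i (qF j))
  simp only [Matrix.of_apply] at hdm
  rw [hRHSmat, hdm, Finset.prod_pow_eq_pow_sum]
  exact hLHS2
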